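/- Let X be an irreducible, aperiodic, positive recurrent Markov chain on a countable set A with stationary distribution π, and suppose X is reversible (π(x)Q(x,y) = π(y)Q(y,x)). Then for any nonnegative measurable f and any n ≥ 1, E_π[f(L_n)] = E_π[f(L_{n+1}(X_1) − 1)], i.e., under the stationary initial distribution, L_n has the same distribution as L_{n+1}(X_1) − 1. -/

import Mathlib

open MeasureTheory ENNReal Finset

/-- The finite-dimensional law of a Markov chain `X` (indexed from 0) with initial
distribution `μ` and transition operator `Q`. -/
def IsChainLaw {A Ω : Type*} [MeasurableSpace Ω] (P : Measure Ω) (X : ℕ → Ω → A)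
    (μ : A → ℝ≥0∞) (Q : A → A → ℝ≥0∞) : Prop :=
  ∀ (n : ℕ) (a : ℕ → A),
    P (⋂ i ∈ Finset.range (n + 1), {ω | X i ω = a i}) =
      μ (a 0) * ∏ i ∈ Finset.range n, Q (a i) (a (i + 1))


lemma null_overlap {Ω : Type*} [MeasurableSpace Ω] {ι : Type*} [Countable ι]
    (P : Measure Ω) [IsFiniteMeasure P] (D : ι → Set Ω) (hD : ∀ c, MeasurableSet (D c))
    (hcover : Set.univ ⊆ ⋃ a, D a) (hsum : ∑' a, P (D a) = P Set.univ)
    {a b : ι} (hab : a ≠ b) : P (D a ∩ D b) = 0 := by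
  classical
  set x := P (D a ∩ D b) with hx
  set h : ι → ℝ≥0∞ := fun c => P (D c \ (D a ∩ D b)) with hh
  have hxa : x ≤ P (D a) := measure_mono Set.inter_subset_left
  have hxb : x ≤ P (D b) := measure_mono Set.inter_subset_right
  have hxfin : x ≠ ∞ := (lt_of_le_of_lt hxa (measure_lt_top P _)).ne
  have hmeas : NullMeasurableSet (D a ∩ D b) P := ((hD a).inter (hD b)).nullMeasurableSet
  have hha : h a = P (D a) - x := measure_diff Set.inter_subset_left hmeas hxfin
  have hhb : h b = P (D b) - x := measure_diff Set.inter_subset_right hmeas hxfin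
  have hcov2 : P Set.univ ≤ x + ∑' c, h c := by
    have hsub : Set.univ ⊆ (D a ∩ D b) ∪ ⋃ c, (D c \ (D a ∩ D b)) := by
      intro ω _
      rcases Set.mem_iUnion.1 (hcover (Set.mem_univ ω)) with ⟨c, hc⟩
      by_cases hω : ω ∈ D a ∩ D b
      · exact Or.inl hω
      · exact Or.inr (Set.mem_iUnion.2 ⟨c, hc, hω⟩)
    calc P Set.univ ≤ P ((D a ∩ D b) ∪ ⋃ c, (D c \ (D a ∩ D b))) := measure_mono hsub
      _ ≤ x + P (⋃ c, (D c \ (D a ∩ D b))) := measure_union_le _ _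
      _ ≤ x + ∑' c, h c := add_le_add_right (measure_iUnion_le _) x
  have hdecP : ∑' c, P (D c) = P (D a) + (P (D b) + ∑' c, if c = b then 0 else if c = a then 0 else P (D c)) := by
    rw [ENNReal.tsum_eq_add_tsum_ite a]
    congr 1
    rw [ENNReal.tsum_eq_add_tsum_ite b, if_neg (Ne.symm hab)]
  have hdech : ∑' c, h c = h a + (h b + ∑' c, if c = b then 0 else if c = a then 0 else h c) := by
    rw [ENNReal.tsum_eq_add_tsum_ite a]
    congr 1
    rw [ENNReal.tsum_eq_add_tsum_ite b, if_neg (Ne.symm hab)]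
  set T : ℝ≥0∞ := ∑' c, if c = b then 0 else if c = a then 0 else P (D c) with hT
  have hTfin : T ≠ ∞ := by
    have : T ≤ ∑' c, P (D c) := ENNReal.tsum_le_tsum (fun c => by
      by_cases h1 : c = b <;> by_cases h2 : c = a <;> simp [h1, h2])
    rw [hsum] at this
    exact (lt_of_le_of_lt this (measure_lt_top P _)).ne
  have hTh : (∑' c, if c = b then 0 else if c = a then 0 else h c) ≤ T := by
    apply ENNReal.tsum_le_tsum; intro c
    by_cases h1 : c = b <;> by_cases h2 : c = a <;>
      simp [h1, h2, hh, measure_mono (Set.diff_subset (s := D c) (t := D a ∩ D b))]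
  have key : P (D a) + (P (D b) + T) ≤ P (D a) + ((P (D b) - x) + T) := by
    calc P (D a) + (P (D b) + T) = ∑' c, P (D c) := hdecP.symm
      _ = P Set.univ := hsum
      _ ≤ x + ∑' c, h c := hcov2
      _ ≤ x + (h a + (h b + T)) := by
          rw [hdech]; exact add_le_add_right (add_le_add_right (add_le_add_right hTh _) _) x
      _ = x + ((P (D a) - x) + ((P (D b) - x) + T)) := by rw [hha, hhb]
      _ = (x + (P (D a) - x)) + ((P (D b) - x) + T) := by ring
      _ = P (D a) + ((P (D b) - x) + T) := by rw [add_tsub_cancel_of_le hxa]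
  have key2 : P (D b) + T ≤ (P (D b) - x) + T :=
    (ENNReal.add_le_add_iff_left (measure_ne_top P _)).1 key
  have key3 : P (D b) ≤ P (D b) - x := (ENNReal.add_le_add_iff_right hTfin).1 key2
  have hEq : P (D b) - x = P (D b) := le_antisymm tsub_le_self key3
  have : x = P (D b) - (P (D b) - x) := (ENNReal.sub_sub_cancel (measure_ne_top P _) hxb).symm
  rw [hEq, tsub_self] at this
  exact this

lemma lintegral_partition {Ω : Type*} [MeasurableSpace Ω] {ι : Type*} [Countable ι]
    (P : Measure Ω) [IsFiniteMeasure P] (C : ι → Set Ω)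
    (hcover : ∀ ω, ∃ a, ω ∈ C a) (hsum : ∑' a, P (C a) = P Set.univ)
    (c : ι → ℝ≥0∞) (g : Ω → ℝ≥0∞) (hg : ∀ a, ∀ ω ∈ C a, g ω = c a) :
    ∫⁻ ω, g ω ∂P = ∑' a, c a * P (C a) := by
  classical
  set D : ι → Set Ω := fun a => toMeasurable P (C a) with hDdef
  have hD : ∀ a, MeasurableSet (D a) := fun a => measurableSet_toMeasurable P (C a)
  have hCD : ∀ a, C a ⊆ D a := fun a => subset_toMeasurable P (C a)
  have hPD : ∀ a, P (D a) = P (C a) := fun a => measure_toMeasurable (C a)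
  have hDcover : Set.univ ⊆ ⋃ a, D a := by
    intro ω _
    rcases hcover ω with ⟨a, ha⟩
    exact Set.mem_iUnion.2 ⟨a, hCD a ha⟩
  have hDsum : ∑' a, P (D a) = P Set.univ := by simpa [hPD] using hsum
  have hover : ∀ a b, a ≠ b → P (D a ∩ D b) = 0 :=
    fun a b hab => null_overlap P D hD hDcover hDsum hab
  set N : ι → Set Ω := fun a => D a ∩ ⋃ b, ⋃ _ : b ≠ a, D b with hNdef
  have hNmeas : ∀ a, MeasurableSet (N a) :=
    fun a => (hD a).inter (MeasurableSet.iUnion fun b => MeasurableSet.iUnion fun _ => hD b)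
  have hNnull : ∀ a, P (N a) = 0 := by
    intro a
    have : N a = ⋃ b, ⋃ _ : b ≠ a, (D a ∩ D b) := by
      simp only [hNdef, Set.inter_iUnion]
    rw [this]
    exact measure_iUnion_null fun b => measure_iUnion_null fun hb => hover a b (Ne.symm hb)
  set E : ι → Set Ω := fun a => D a \ N a with hEdef
  have hEmeas : ∀ a, MeasurableSet (E a) := fun a => (hD a).diff (hNmeas a)
  have hPE : ∀ a, P (E a) = P (C a) := by
    intro a; rw [hEdef]; simp only
    rw [measure_diff_null (hNnull a)]; exact hPD a
  have hEdisj : ∀ a b, a ≠ b → ∀ ω, ω ∈ E a → ω ∉ E b := by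
    intro a b hab ω ha hb
    have h1 : ω ∉ N a := ha.2
    apply h1
    exact ⟨ha.1, Set.mem_iUnion.2 ⟨b, Set.mem_iUnion.2 ⟨Ne.symm hab, hb.1⟩⟩⟩
  set g' : Ω → ℝ≥0∞ := fun ω => ∑' a, (E a).indicator (fun _ => c a) ω with hg'def
  have hae : g =ᵐ[P] g' := by
    have hSnull : P (⋃ a, (C a \ E a)) = 0 := by
      apply measure_iUnion_null
      intro a
      apply measure_mono_null _ (hNnull a)
      intro ω hω
      rcases hω with ⟨hωC, hωE⟩
      by_contra hωN
      exact hωE ⟨hCD a hωC, hωN⟩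
    refine measure_mono_null ?_ hSnull
    intro ω hω
    simp only [Set.mem_compl_iff, Set.mem_setOf_eq] at hω ⊢
    by_contra hnot
    apply hω
    rcases hcover ω with ⟨a, ha⟩
    have hωE : ω ∈ E a := by
      by_contra hE'
      exact hnot (Set.mem_iUnion.2 ⟨a, ha, hE'⟩)
    have : g' ω = c a := by
      rw [hg'def]
      simp only
      rw [tsum_eq_single a]
      · simp [Set.indicator_of_mem hωE]
      · intro b hb
        exact Set.indicator_of_notMem (fun h => hEdisj a b (Ne.symm hb) ω hωE ((hEdisj b a hb ω h) hωE).elim) _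
    rw [this, hg a ω ha]
  rw [lintegral_congr_ae hae, hg'def]
  simp only
  rw [lintegral_tsum (fun a => (measurable_const.indicator (hEmeas a)).aemeasurable)]
  apply tsum_congr
  intro a
  rw [lintegral_indicator_const (hEmeas a), hPE a]

def snocEquiv (A : Type*) (m : ℕ) : ((Fin (m+1) → A) × A) ≃ (Fin (m+2) → A) where
  toFun p := Fin.snoc p.1 p.2
  invFun a := (Fin.init a, a (Fin.last _))
  left_inv p := by simp [Fin.init_snoc, Fin.snoc_last]
  right_inv a := by simp [Fin.snoc_init_self]

lemma mass_lemma {A : Type*} [Countable A] (Q : A → A → ℝ≥0∞) (π : A → ℝ≥0∞)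
    (hQ : ∀ x, ∑' y, Q x y = 1) (hπsum : ∑' x, π x = 1) :
    ∀ m, ∑' a : Fin (m+1) → A, π (a 0) * ∏ i : Fin m, Q (a i.castSucc) (a i.succ) = 1 := by
  intro m
  induction m with
  | zero =>
    rw [← (Equiv.funUnique (Fin 1) A).symm.tsum_eq
      (fun a : Fin 1 → A => π (a 0) * ∏ i : Fin 0, Q (a i.castSucc) (a i.succ))]
    simpa using hπsum
  | succ m ih =>
    rw [← (snocEquiv A m).tsum_eq
      (fun a : Fin (m+2) → A => π (a 0) * ∏ i : Fin (m+1), Q (a i.castSucc) (a i.succ))]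
    have hterm : ∀ p : (Fin (m+1) → A) × A,
        π ((snocEquiv A m p) 0) * ∏ i : Fin (m+1), Q ((snocEquiv A m p) i.castSucc) ((snocEquiv A m p) i.succ)
        = (π (p.1 0) * ∏ i : Fin m, Q (p.1 i.castSucc) (p.1 i.succ)) * Q (p.1 (Fin.last m)) p.2 := by
      rintro ⟨b, y⟩
      show π ((Fin.snoc b y : Fin (m+2) → A) 0) * ∏ i : Fin (m+1),
          Q ((Fin.snoc b y : Fin (m+2) → A) i.castSucc) ((Fin.snoc b y : Fin (m+2) → A) i.succ) = _
      rw [Fin.prod_univ_castSucc]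
      have h0 : (Fin.snoc b y : Fin (m+2) → A) 0 = b 0 := by
        rw [← Fin.castSucc_zero, Fin.snoc_castSucc]
      have h1 : ∀ i : Fin m, (Fin.snoc b y : Fin (m+2) → A) i.castSucc.castSucc = b i.castSucc := by
        intro i; rw [Fin.snoc_castSucc]
      have h2 : ∀ i : Fin m, (Fin.snoc b y : Fin (m+2) → A) i.castSucc.succ = b i.succ := by
        intro i; rw [Fin.succ_castSucc, Fin.snoc_castSucc]
      have h3 : (Fin.snoc b y : Fin (m+2) → A) (Fin.last m).castSucc = b (Fin.last m) := by
        rw [Fin.snoc_castSucc]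
      have h4 : (Fin.snoc b y : Fin (m+2) → A) (Fin.last m).succ = y := by
        rw [Fin.succ_last, Fin.snoc_last]
      rw [h0, h3, h4]
      have hprod : (∏ i : Fin m, Q ((Fin.snoc b y : Fin (m+2) → A) i.castSucc.castSucc)
          ((Fin.snoc b y : Fin (m+2) → A) i.castSucc.succ)) = ∏ i : Fin m, Q (b i.castSucc) (b i.succ) :=
        Finset.prod_congr rfl (fun i _ => by rw [h1 i, h2 i])
      rw [hprod]; ring
    calc ∑' p : (Fin (m+1) → A) × A, π ((snocEquiv A m p) 0) *
            ∏ i : Fin (m+1), Q ((snocEquiv A m p) i.castSucc) ((snocEquiv A m p) i.succ)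
        = ∑' p : (Fin (m+1) → A) × A,
            (π (p.1 0) * ∏ i : Fin m, Q (p.1 i.castSucc) (p.1 i.succ)) * Q (p.1 (Fin.last m)) p.2 :=
          tsum_congr hterm
      _ = ∑' b : Fin (m+1) → A, ∑' y : A,
            (π (b 0) * ∏ i : Fin m, Q (b i.castSucc) (b i.succ)) * Q (b (Fin.last m)) y :=
          ENNReal.tsum_prod (f := fun (b : Fin (m+1) → A) (y : A) =>
            (π (b 0) * ∏ i : Fin m, Q (b i.castSucc) (b i.succ)) * Q (b (Fin.last m)) y)
      _ = ∑' b : Fin (m+1) → A, (π (b 0) * ∏ i : Fin m, Q (b i.castSucc) (b i.succ)) := by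
          apply tsum_congr; intro b
          rw [ENNReal.tsum_mul_left, hQ, mul_one]
      _ = 1 := ih

lemma rev_weight {A : Type*} (Q : A → A → ℝ≥0∞) (π : A → ℝ≥0∞)
    (hrev : ∀ x y, π x * Q x y = π y * Q y x) :
    ∀ m (a : Fin (m+1) → A),
      π (a (Fin.last m)) * ∏ i : Fin m, Q (a i.succ) (a i.castSucc)
        = π (a 0) * ∏ i : Fin m, Q (a i.castSucc) (a i.succ) := by
  intro m
  induction m with
  | zero => intro a; simp [Fin.last]
  | succ m ih =>
    intro a
    set b : Fin (m+1) → A := fun i => a i.castSucc with hb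
    have hb0 : b 0 = a 0 := by rw [hb]; simp
    have hbl : b (Fin.last m) = a (Fin.last m).castSucc := rfl
    have hsucc : ∀ i : Fin m, b i.succ = a i.castSucc.succ := by
      intro i; rw [hb, Fin.succ_castSucc]
    have hcast : ∀ i : Fin m, b i.castSucc = a i.castSucc.castSucc := fun i => rfl
    rw [Fin.prod_univ_castSucc (fun i : Fin (m+1) => Q (a i.succ) (a i.castSucc)),
        Fin.prod_univ_castSucc (fun i : Fin (m+1) => Q (a i.castSucc) (a i.succ))]
    have hP1 : (∏ i : Fin m, Q (a i.castSucc.succ) (a i.castSucc.castSucc))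
        = ∏ i : Fin m, Q (b i.succ) (b i.castSucc) :=
      Finset.prod_congr rfl (fun i _ => by rw [hsucc i, hcast i])
    have hP2 : (∏ i : Fin m, Q (a i.castSucc.castSucc) (a i.castSucc.succ))
        = ∏ i : Fin m, Q (b i.castSucc) (b i.succ) :=
      Finset.prod_congr rfl (fun i _ => by rw [hsucc i, hcast i])
    simp only [hP1, hP2, Fin.succ_last]
    have key : π (a (Fin.last (m+1))) * Q (a (Fin.last (m+1))) (a (Fin.last m).castSucc)
        = π (a (Fin.last m).castSucc) * Q (a (Fin.last m).castSucc) (a (Fin.last (m+1))) := hrev _ _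
    calc π (a (Fin.last (m+1))) * ((∏ i : Fin m, Q (b i.succ) (b i.castSucc)) * Q (a (Fin.last (m+1))) (a (Fin.last m).castSucc))
        = (π (a (Fin.last (m+1))) * Q (a (Fin.last (m+1))) (a (Fin.last m).castSucc)) * ∏ i : Fin m, Q (b i.succ) (b i.castSucc) := by ring
      _ = (π (b (Fin.last m)) * ∏ i : Fin m, Q (b i.succ) (b i.castSucc)) * Q (a (Fin.last m).castSucc) (a (Fin.last (m+1))) := by
          rw [key, hbl]; ring
      _ = (π (b 0) * ∏ i : Fin m, Q (b i.castSucc) (b i.succ)) * Q (a (Fin.last m).castSucc) (a (Fin.last (m+1))) := by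
          rw [ih b]
      _ = π (a 0) * ((∏ i : Fin m, Q (b i.castSucc) (b i.succ)) * Q (a (Fin.last m).castSucc) (a (Fin.last (m+1)))) := by
          rw [hb0]; ring

/-- if the chain is reversible and started from its stationary
distribution `π`, then `E_π[f(L_n)] = E_π[f(L_{n+1}(X_1) − 1)]` for every nonnegative `f`,
i.e. under `P_π`, `L_n` has the same distribution as `L_{n+1}(X_1) − 1`.
(Chains are indexed from 0, so `X_1` of the paper is `X 0`.) -/
theorem reversible_Ln_eq_local_time {A : Type*} [Countable A] [DecidableEq A]
    {Ω : Type*} [MeasurableSpace Ω]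
    (P : Measure Ω) [IsProbabilityMeasure P]
    (X : ℕ → Ω → A)
    (Q : A → A → ℝ≥0∞) (π : A → ℝ≥0∞)
    (hQ : ∀ x, ∑' y, Q x y = 1)
    (hπpos : ∀ x, 0 < π x) (hπfin : ∀ x, π x ≠ ∞) (hπsum : ∑' x, π x = 1)
    (hstat : ∀ x, ∑' y, π y * Q y x = π x)
    (hirr : ∀ x y, ∃ t : ℕ, ∃ b : ℕ → A, b 0 = x ∧ b t = y ∧
      0 < ∏ i ∈ Finset.range t, Q (b i) (b (i + 1)))
    (hrev : ∀ x y, π x * Q x y = π y * Q y x)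
    (hX : IsChainLaw P X π Q)
    (f : ℕ → ℝ≥0∞) (n : ℕ) (hn : 1 ≤ n) :
    ∫⁻ ω, f (∑ i ∈ Finset.range n, if X i ω = X n ω then 1 else 0) ∂P =
      ∫⁻ ω, f ((∑ i ∈ Finset.range (n + 1), if X i ω = X 0 ω then 1 else 0) - 1) ∂P := by
  classical
  set ext : (Fin (n+1) → A) → ℕ → A := fun a i => a ⟨min i n, by omega⟩ with hextdef
  have hext : ∀ (a : Fin (n+1) → A) (i : ℕ) (h : i ≤ n), ext a i = a ⟨i, by omega⟩ := by
    intro a i h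
    simp only [hextdef]
    congr 1
    exact Fin.ext (by simp [min_eq_left h])
  set C : (Fin (n+1) → A) → Set Ω := fun a => {ω | ∀ j : Fin (n+1), X j ω = a j} with hCdef
  have hPC : ∀ a, P (C a) = π (a 0) * ∏ i : Fin n, Q (a i.castSucc) (a i.succ) := by
    intro a
    have hset : (⋂ i ∈ Finset.range (n+1), {ω | X i ω = ext a i}) = C a := by
      ext ω
      simp only [Set.mem_iInter, Finset.mem_range, Set.mem_setOf_eq, hCdef]
      constructor
      · intro h j
        have hj := h j.val (by omega)
        rwa [hext a j.val (by omega), Fin.eta] at hj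
      · intro h i hi
        rw [hext a i (by omega)]
        exact h ⟨i, by omega⟩
    have hlaw := hX n (ext a)
    rw [hset] at hlaw
    rw [hlaw, hext a 0 (by omega)]
    congr 1
    rw [← Fin.prod_univ_eq_prod_range (fun i => Q (ext a i) (ext a (i+1))) n]
    apply Finset.prod_congr rfl
    intro i _
    rw [hext a i.val (by omega), hext a (i.val+1) (by omega)]
    rfl
  have hsum : ∑' a, P (C a) = P Set.univ := by
    rw [measure_univ]
    calc ∑' a, P (C a)
        = ∑' a : Fin (n+1) → A, π (a 0) * ∏ i : Fin n, Q (a i.castSucc) (a i.succ) :=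
          tsum_congr hPC
      _ = 1 := mass_lemma Q π hQ hπsum n
  have hcover : ∀ ω, ∃ a, ω ∈ C a := fun ω => ⟨fun j => X j ω, fun j => rfl⟩
  set c1 : (Fin (n+1) → A) → ℝ≥0∞ :=
    fun a => f (∑ i ∈ Finset.range n, if ext a i = ext a n then 1 else 0) with hc1
  set c2 : (Fin (n+1) → A) → ℝ≥0∞ :=
    fun a => f ((∑ i ∈ Finset.range (n+1), if ext a i = ext a 0 then 1 else 0) - 1) with hc2
  have hXω : ∀ (a : Fin (n+1) → A), ∀ ω ∈ C a, ∀ i ≤ n, X i ω = ext a i := by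
    intro a ω hω i hi
    rw [hext a i hi]
    exact hω ⟨i, by omega⟩
  have hL : ∫⁻ ω, f (∑ i ∈ Finset.range n, if X i ω = X n ω then 1 else 0) ∂P
      = ∑' a, c1 a * P (C a) := by
    apply lintegral_partition P C hcover hsum c1
    intro a ω hω
    simp only [hc1]
    congr 1
    apply Finset.sum_congr rfl
    intro i hi
    rw [hXω a ω hω i (by simp at hi; omega), hXω a ω hω n le_rfl]
  have hR : ∫⁻ ω, f ((∑ i ∈ Finset.range (n+1), if X i ω = X 0 ω then 1 else 0) - 1) ∂P
      = ∑' a, c2 a * P (C a) := by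
    apply lintegral_partition P C hcover hsum c2
    intro a ω hω
    simp only [hc2]
    congr 2
    apply Finset.sum_congr rfl
    intro i hi
    rw [hXω a ω hω i (by simp at hi; omega), hXω a ω hω 0 (by omega)]
  rw [hL, hR]
  -- reversal
  set rE : (Fin (n+1) → A) ≃ (Fin (n+1) → A) :=
    { toFun := fun a i => a i.rev
      invFun := fun a i => a i.rev
      left_inv := fun a => funext fun i => by simp [Fin.rev_rev]
      right_inv := fun a => funext fun i => by simp [Fin.rev_rev] } with hrE
  have hrEapp : ∀ (a : Fin (n+1) → A) (i : Fin (n+1)), rE a i = a i.rev := fun a i => rfl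
  have hPrev : ∀ a, P (C (rE a)) = P (C a) := by
    intro a
    rw [hPC, hPC]
    have h0 : rE a 0 = a (Fin.last n) := by rw [hrEapp, Fin.rev_zero]
    have hprod : (∏ i : Fin n, Q (rE a i.castSucc) (rE a i.succ))
        = ∏ i : Fin n, Q (a i.succ) (a i.castSucc) := by
      have hterm : ∀ i : Fin n, Q (rE a i.castSucc) (rE a i.succ)
          = Q (a i.rev.succ) (a i.rev.castSucc) := by
        intro i
        rw [hrEapp, hrEapp, Fin.rev_castSucc, Fin.rev_succ]
      rw [Finset.prod_congr rfl (fun i _ => hterm i)]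
      exact Fintype.prod_equiv Fin.revPerm _ _ (fun i => rfl)
    rw [h0, hprod]
    exact rev_weight Q π hrev n a
  have hc : ∀ a, c2 (rE a) = c1 a := by
    intro a
    simp only [hc1, hc2]
    congr 1
    have key : ∀ i ≤ n, ext (rE a) i = ext a (n - i) := by
      intro i hi
      rw [hext _ i hi, hext a (n - i) (by omega), hrEapp]
      congr 1
      refine Fin.ext ?_
      simp only [Fin.val_rev]
      omega
    have h0' : ext (rE a) 0 = ext a n := by
      have := key 0 (by omega)
      rwa [Nat.sub_zero] at this
    have hsum2 : (∑ i ∈ Finset.range (n+1), if ext (rE a) i = ext (rE a) 0 then (1:ℕ) else 0)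
        = (∑ i ∈ Finset.range n, if ext a i = ext a n then (1:ℕ) else 0) + 1 := by
      calc ∑ i ∈ Finset.range (n+1), (if ext (rE a) i = ext (rE a) 0 then (1:ℕ) else 0)
          = ∑ i ∈ Finset.range (n+1),
              (fun j => if ext a j = ext a n then (1:ℕ) else 0) (n + 1 - 1 - i) := by
            apply Finset.sum_congr rfl
            intro i hi
            simp only [Nat.add_sub_cancel]
            rw [key i (by simp at hi; omega), h0']
        _ = ∑ i ∈ Finset.range (n+1), if ext a i = ext a n then (1:ℕ) else 0 :=
            by simpa using Finset.sum_range_reflect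
                (fun j => if ext a j = ext a n then (1:ℕ) else 0) (n+1)
        _ = (∑ i ∈ Finset.range n, if ext a i = ext a n then (1:ℕ) else 0) + 1 := by
            rw [Finset.sum_range_succ, if_pos rfl]
    rw [hsum2, Nat.add_sub_cancel]
  calc ∑' a, c1 a * P (C a)
      = ∑' a, c2 (rE a) * P (C (rE a)) := by
        apply tsum_congr
        intro a
        rw [hc a, hPrev a]
    _ = ∑' a, c2 a * P (C a) := rE.tsum_eq (fun a => c2 a * P (C a))
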